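/- Let N ≥ 1, h = 1/N, t_i = i·h. Then ∑_{i=1}^{N} ∫_{t_{i−1}}^{t_i} ∫_{t_{i−1}}^{r} (t_i − r)²/(1 − u) du dr ≤ h². -/

import Mathlib

open MeasureTheory

theorem stmt_13 (N : ℕ) (hN : 1 ≤ N) (h : ℝ) (hh : h = 1 / (N : ℝ)) :
    (∑ i ∈ Finset.Icc 1 N,
        ∫ r in (((i : ℝ) - 1) * h)..((i : ℝ) * h),
          ∫ u in (((i : ℝ) - 1) * h)..r, ((i : ℝ) * h - r) ^ 2 / (1 - u)) ≤ h ^ 2 := by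
  have hNpos : (0:ℝ) < N := by exact_mod_cast hN
  have hpos : 0 < h := by rw [hh]; positivity
  have hNh : (N:ℝ) * h = 1 := by rw [hh]; field_simp
  have key : ∀ i ∈ Finset.Icc 1 N,
      (∫ r in (((i : ℝ) - 1) * h)..((i : ℝ) * h),
          ∫ u in (((i : ℝ) - 1) * h)..r, ((i : ℝ) * h - r) ^ 2 / (1 - u)) ≤ h ^ 3 / 2 := by
    intro i hi
    simp only [Finset.mem_Icc] at hi
    set a := ((i:ℝ) - 1) * h with ha
    set b := ((i:ℝ) * h) with hb
    have hba : b - a = h := by rw [ha, hb]; ring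
    have hab : a ≤ b := by linarith
    have hiN : (i:ℝ) ≤ N := by exact_mod_cast hi.2
    have hb1 : b ≤ 1 := by
      rw [hb]
      calc (i:ℝ) * h ≤ (N:ℝ) * h := by
            apply mul_le_mul_of_nonneg_right hiN hpos.le
        _ = 1 := hNh
    -- inner bound
    have hinner : ∀ r : ℝ, a ≤ r → r < 1 → r ≤ b →
        (∫ u in a..r, (b - r) ^ 2 / (1 - u)) ≤ (r - a) * (b - r) := by
      intro r har hr1 hrb
      have hint : IntervalIntegrable (fun u => (b - r) ^ 2 / (1 - u)) volume a r := by
        apply ContinuousOn.intervalIntegrable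
        apply ContinuousOn.div continuousOn_const (by fun_prop)
        intro u hu
        rw [Set.uIcc_of_le har] at hu
        have : u ≤ r := hu.2
        intro h0
        have : u = 1 := by linarith
        linarith
      have hmono := intervalIntegral.integral_mono_on har hint
        (intervalIntegrable_const (c := b - r)) ?_
      · calc (∫ u in a..r, (b - r) ^ 2 / (1 - u)) ≤ ∫ _ in a..r, (b - r) := hmono
          _ = (r - a) * (b - r) := by
              rw [intervalIntegral.integral_const, smul_eq_mul]
      · intro x hx
        have hx1 : x ≤ r := hx.2
        have h1x : 0 < 1 - x := by linarith
        rw [div_le_iff₀ h1x]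
        nlinarith [hx.2, hrb, hb1]
    rw [intervalIntegral.integral_of_le hab]
    have hFnn : 0 ≤ᵐ[volume.restrict (Set.Ioc a b)]
        fun r => ∫ u in a..r, (b - r) ^ 2 / (1 - u) := by
      filter_upwards [ae_restrict_mem measurableSet_Ioc] with r hr
      apply intervalIntegral.integral_nonneg hr.1.le
      intro u hu
      apply div_nonneg (by positivity)
      have : u ≤ r := hu.2
      linarith [hr.2]
    have hgint : IntegrableOn (fun r => h * (b - r)) (Set.Ioc a b) := by
      apply Continuous.integrableOn_Ioc
      continuity
    have hneb : ∀ᵐ r ∂(volume.restrict (Set.Ioc a b)), r ≠ b := by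
      apply ae_restrict_of_ae
      rw [ae_iff]
      have : {x : ℝ | ¬ x ≠ b} = {b} := by ext x; simp
      rw [this]
      exact measure_singleton b
    have hle : (fun r => ∫ u in a..r, (b - r) ^ 2 / (1 - u))
        ≤ᵐ[volume.restrict (Set.Ioc a b)] fun r => h * (b - r) := by
      filter_upwards [ae_restrict_mem measurableSet_Ioc, hneb] with r hr hrneb
      have hrltb : r < b := lt_of_le_of_ne hr.2 hrneb
      calc (∫ u in a..r, (b - r) ^ 2 / (1 - u)) ≤ (r - a) * (b - r) :=
            hinner r hr.1.le (lt_of_lt_of_le hrltb hb1) hr.2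
        _ ≤ h * (b - r) := by nlinarith [hr.1, hr.2]
    calc (∫ r in Set.Ioc a b, ∫ u in a..r, (b - r) ^ 2 / (1 - u))
        ≤ ∫ r in Set.Ioc a b, h * (b - r) :=
          integral_mono_of_nonneg hFnn hgint hle
      _ = ∫ r in a..b, h * (b - r) := (intervalIntegral.integral_of_le hab).symm
      _ = h ^ 3 / 2 := by
          rw [intervalIntegral.integral_const_mul]
          have hsub : (∫ r in a..b, (b - r)) = (b - a) * b - (b ^ 2 - a ^ 2) / 2 := by
            have hid : IntervalIntegrable (fun r : ℝ => r) volume a b :=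
              (continuous_id.intervalIntegrable a b)
            rw [intervalIntegral.integral_sub intervalIntegrable_const hid]
            rw [intervalIntegral.integral_const, smul_eq_mul]
            rw [show (∫ r in a..b, r) = (b ^ 2 - a ^ 2) / 2 from integral_id]
          rw [hsub]
          have hbah : b = a + h := by linarith
          rw [hbah]; ring
  calc (∑ i ∈ Finset.Icc 1 N,
        ∫ r in (((i : ℝ) - 1) * h)..((i : ℝ) * h),
          ∫ u in (((i : ℝ) - 1) * h)..r, ((i : ℝ) * h - r) ^ 2 / (1 - u))
      ≤ ∑ _i ∈ Finset.Icc 1 N, h ^ 3 / 2 := Finset.sum_le_sum key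
    _ = (N : ℝ) * (h ^ 3 / 2) := by
        rw [Finset.sum_const, Nat.card_Icc]
        simp [nsmul_eq_mul]
    _ ≤ h ^ 2 := by nlinarith [hNh, hpos]
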